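/- Let A be an nBA and a ∈ B_A (a 2-central element). Then the coordinates of a are a₁ = ¬a, a₂ = a, and aₖ = e₁ (= 0) for 3 ≤ k ≤ n. -/

import Mathlib

/-- A pure Boolean-like algebra of dimension `n`: a type with constants `e₁,…,eₙ` and an
`(n+1)`-ary operation `q` satisfying `q(eᵢ,x̄) = xᵢ`, in which every element `c` is
`n`-central: (B1) `q(c,e₁,…,eₙ) = c`, (B2) `q(c,x,…,x) = x`, and (B3) `q(c,−)` commutes
with `q` itself. -/
structure PNBA (n : ℕ) where
  A : Type
  e : Fin n → A
  q : A → (Fin n → A) → A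
  q_e : ∀ (i : Fin n) (x : Fin n → A), q (e i) x = x i
  B1 : ∀ c : A, q c e = c
  B2 : ∀ (c x : A), q c (fun _ => x) = x
  B3q : ∀ (c : A) (a : Fin n → A) (m : Fin n → Fin n → A),
      q c (fun i => q (a i) (m i)) = q (q c a) (fun j => q c (fun i => m i j))

/-- The ternary operation `p(x,y,z) = q(x,y,z,e₃,…,eₙ)`. -/
def PNBA.p {n : ℕ} (B : PNBA (n + 2)) (x y z : B.A) : B.A :=
  B.q x (fun i => if i = 0 then y else if i = 1 then z else B.e i)

/-- Membership in `B_A`, the Boolean algebra of `2`-central elements of the `nBA`: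
`x ∈ B_A` iff `p(x,y,y) = y` for all `y`. -/
def PNBA.inBA {n : ℕ} (B : PNBA (n + 2)) (x : B.A) : Prop :=
  ∀ y : B.A, B.p x y y = y

/-- The `i`-th coordinate of an element `a`:
`aᵢ = q(a, e₁,…,e₁, e₂, e₁,…,e₁)` with `e₂` in position `i`. -/
def PNBA.coord {n : ℕ} (B : PNBA (n + 2)) (a : B.A) (i : Fin (n + 2)) : B.A :=
  B.q a (fun k => if k = i then B.e 1 else B.e 0)

/-- Negation in the Boolean algebra `B_A`: `¬x = p(x, e₂, e₁)`. -/
def PNBA.neg {n : ℕ} (B : PNBA (n + 2)) (x : B.A) : B.A := B.p x (B.e 1) (B.e 0)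

/-- `q (q c b) w = q c (fun i => q (b i) w)`. -/
theorem PNBA.hom {n : ℕ} (B : PNBA n) (c : B.A) (b : Fin n → B.A) (w : Fin n → B.A) :
    B.q (B.q c b) w = B.q c (fun i => B.q (b i) w) := by
  have h := B.B3q c b (fun _ => w)
  simpa [B.B2] using h.symm

/-- Tail–irrelevance on equal first two coordinates, for 2-central `a`. -/
theorem PNBA.L1 {n : ℕ} (B : PNBA (n + 2)) (a : B.A) (ha : B.inBA a)
    (z : B.A) (t : Fin (n + 2) → B.A) :
    B.q a (fun i => if (i : ℕ) ≤ 1 then z else t i) = z := by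
  have hb : B.q a (fun i : Fin (n + 2) => if (i : ℕ) ≤ 1 then B.e 0 else B.e i) = B.e 0 := by
    have h := ha (B.e 0)
    unfold PNBA.p at h
    have hvec : (fun i : Fin (n + 2) => if (i : ℕ) ≤ 1 then B.e 0 else B.e i)
        = (fun i : Fin (n + 2) =>
            if i = 0 then B.e 0 else if i = 1 then B.e 0 else B.e i) := by
      funext i
      rcases Nat.lt_or_ge (i : ℕ) 2 with hi | hi
      · have : (i : ℕ) = 0 ∨ (i : ℕ) = 1 := by omega
        rcases this with h0 | h1
        · have hi0 : i = 0 := by apply Fin.ext; simpa using h0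
          subst hi0
          simp
        · have hi1 : i = 1 := by apply Fin.ext; simpa using h1
          subst hi1
          have h01 : (1 : Fin (n + 2)) ≠ 0 := by simp [Fin.ext_iff]
          simp [h01]
      · have h0 : i ≠ 0 := by intro h; subst h; simp at hi
        have h1 : i ≠ 1 := by simp [Fin.ext_iff]; omega
        have h2 : ¬ (i : ℕ) ≤ 1 := by omega
        simp [h0, h1, h2]
    rw [hvec]
    exact h
  set w : Fin (n + 2) → B.A := fun i => if (i : ℕ) ≤ 1 then z else t i with hw
  have h := B.hom a (fun i : Fin (n + 2) => if (i : ℕ) ≤ 1 then B.e 0 else B.e i) w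
  rw [hb, B.q_e] at h
  have hw0 : w 0 = z := by simp [hw]
  rw [hw0] at h
  rw [h]
  congr 1
  funext i
  by_cases hi : (i : ℕ) ≤ 1
  · simp [hi, B.q_e, hw]
  · simp [hi, B.q_e, hw]

/-- For 2-central `a`, the second coordinate is `a` itself. -/
theorem PNBA.coord_one {n : ℕ} (B : PNBA (n + 2)) (a : B.A) (ha : B.inBA a) :
    B.coord a 1 = a := by
  have h := B.B3q a B.e (fun i j => if (i : ℕ) ≤ 1 then B.e j else B.e 0)
  rw [B.B1] at h
  have hL : B.coord a 1 =
      B.q a (fun i => B.q (B.e i) (fun j => if (i : ℕ) ≤ 1 then B.e j else B.e 0)) := by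
    unfold PNBA.coord
    congr 1
    funext i
    rw [B.q_e]
    rcases Nat.lt_or_ge (i : ℕ) 2 with hi | hi
    · have : (i : ℕ) = 0 ∨ (i : ℕ) = 1 := by omega
      rcases this with h0 | h1
      · have hi0 : i = 0 := by apply Fin.ext; simpa using h0
        subst hi0
        simp [Fin.ext_iff]
      · have hi1 : i = 1 := by apply Fin.ext; simpa using h1
        subst hi1
        simp
    · have h1 : i ≠ 1 := by simp [Fin.ext_iff]; omega
      have h2 : ¬ (i : ℕ) ≤ 1 := by omega
      simp [h1, h2]
  rw [hL, h]
  have hcol : ∀ j : Fin (n + 2),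
      B.q a (fun i : Fin (n + 2) => if (i : ℕ) ≤ 1 then B.e j else B.e 0) = B.e j :=
    fun j => B.L1 a ha (B.e j) (fun _ => B.e 0)
  calc B.q a (fun j => B.q a fun i => if (i : ℕ) ≤ 1 then B.e j else B.e 0)
      = B.q a B.e := by congr 1; funext j; exact hcol j
    _ = a := B.B1 a

/-- For 2-central `a`, `q a w` depends only on `w 0` and `w 1`. -/
theorem PNBA.M {n : ℕ} (B : PNBA (n + 2)) (a : B.A) (ha : B.inBA a)
    (w : Fin (n + 2) → B.A) :
    B.q a w = B.q a (fun i => if i = 1 then w 1 else w 0) := by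
  have h := B.hom a (fun k : Fin (n + 2) => if k = 1 then B.e 1 else B.e 0) w
  have hc : B.q a (fun k : Fin (n + 2) => if k = 1 then B.e 1 else B.e 0) = a :=
    B.coord_one a ha
  rw [hc] at h
  rw [h]
  congr 1
  funext i
  by_cases hi : i = 1 <;> simp [hi, B.q_e]

/-- For a `2`-central element `a ∈ B_A` of an `nBA`, the coordinates of `a` are
`a₁ = ¬a`, `a₂ = a`, and `aₖ = e₁ (= 0)` for `3 ≤ k ≤ n`. -/
theorem coords_of_boolean_element {n : ℕ} (B : PNBA (n + 2)) (a : B.A)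
    (ha : B.inBA a) :
    B.coord a 0 = B.neg a ∧
    B.coord a 1 = a ∧
    (∀ k : Fin (n + 2), 2 ≤ (k : ℕ) → B.coord a k = B.e 0) := by
  refine ⟨?_, B.coord_one a ha, ?_⟩
  · -- coord a 0 = neg a : both equal q a (fun i => if i = 1 then e 0 else e 1)
    have h01 : (1 : Fin (n + 2)) ≠ 0 := by simp [Fin.ext_iff]
    have hA := B.M a ha (fun k : Fin (n + 2) => if k = 0 then B.e 1 else B.e 0)
    have hB := B.M a ha
      (fun i : Fin (n + 2) => if i = 0 then B.e 1 else if i = 1 then B.e 0 else B.e i)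
    simp only [if_pos rfl, if_neg h01] at hA hB
    unfold PNBA.coord PNBA.neg PNBA.p
    exact hA.trans hB.symm
  · intro k hk
    have h := B.L1 a ha (B.e 0) (fun i : Fin (n + 2) => if i = k then B.e 1 else B.e 0)
    have hfun : (fun i : Fin (n + 2) => if i = k then B.e 1 else B.e 0)
        = (fun i : Fin (n + 2) =>
            if (i : ℕ) ≤ 1 then B.e 0 else if i = k then B.e 1 else B.e 0) := by
      funext i
      by_cases hi : (i : ℕ) ≤ 1
      · have hik : i ≠ k := by simp [Fin.ext_iff]; omega
        simp [hi, hik]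
      · simp [hi]
    unfold PNBA.coord
    rw [hfun]
    exact h
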